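/- Let F : 𝒞 → 𝒟 be a triangulated functor between pretriangulated categories, each equipped with a weight structure, and assume that the weight structure on 𝒞 is bounded. Then F is w-exact if and only if F maps the heart into the heart, i.e. F(𝒞^{w=0}) ⊆ 𝒟^{w=0}. -/

import Mathlib

open CategoryTheory Category Limits Pretriangulated

/-- A weight structure on a pretriangulated category: two classes of objects `le`
(the class `𝒞^{w≤0}`) and `ge` (the class `𝒞^{w≥0}`), each containing the zero objects
and closed under isomorphisms, finite direct sums and retracts, satisfying the shift,
orthogonality and weight decomposition axioms. -/
structure WeightStructure (C : Type*) [Category C] [HasZeroObject C] [HasShift C ℤ]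
    [Preadditive C] [∀ n : ℤ, (CategoryTheory.shiftFunctor C n).Additive]
    [Pretriangulated C] [HasBinaryBiproducts C] where
  le : C → Prop
  ge : C → Prop
  le_of_isZero : ∀ X : C, IsZero X → le X
  ge_of_isZero : ∀ X : C, IsZero X → ge X
  le_of_iso : ∀ {X Y : C}, (X ≅ Y) → le X → le Y
  ge_of_iso : ∀ {X Y : C}, (X ≅ Y) → ge X → ge Y
  le_biprod : ∀ X Y : C, le X → le Y → le (X ⊞ Y)
  ge_biprod : ∀ X Y : C, ge X → ge Y → ge (X ⊞ Y)
  le_retract : ∀ (X Y : C) (i : X ⟶ Y) (p : Y ⟶ X), i ≫ p = 𝟙 X → le Y → le X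
  ge_retract : ∀ (X Y : C) (i : X ⟶ Y) (p : Y ⟶ X), i ≫ p = 𝟙 X → ge Y → ge X
  ge_shift : ∀ X : C, ge X → ge (X⟦(-1 : ℤ)⟧)
  le_shift : ∀ X : C, le X → le (X⟦(1 : ℤ)⟧)
  orth : ∀ {X Y : C}, ge X → le Y → ∀ f : X ⟶ Y⟦(1 : ℤ)⟧, f = 0
  decomp : ∀ X : C, ∃ (A B : C) (f : B ⟶ X) (g : X ⟶ A) (h : A ⟶ B⟦(1 : ℤ)⟧),
    ge (B⟦(1 : ℤ)⟧) ∧ le A ∧ Triangle.mk f g h ∈ distTriang C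

variable {C : Type*} [Category C] [HasZeroObject C] [HasShift C ℤ]
  [Preadditive C] [∀ n : ℤ, (CategoryTheory.shiftFunctor C n).Additive]
  [Pretriangulated C] [HasBinaryBiproducts C]

/-- `X ∈ 𝒞^{w≤n}`, i.e. `X⟦n⟧ ∈ 𝒞^{w≤0}`. -/
def WeightStructure.leN (w : WeightStructure C) (n : ℤ) (X : C) : Prop := w.le (X⟦n⟧)

/-- `X ∈ 𝒞^{w≥n}`, i.e. `X⟦n⟧ ∈ 𝒞^{w≥0}`. -/
def WeightStructure.geN (w : WeightStructure C) (n : ℤ) (X : C) : Prop := w.ge (X⟦n⟧)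

/-- The heart `𝒞^{w=0} = 𝒞^{w≥0} ∩ 𝒞^{w≤0}`. -/
def WeightStructure.heart (w : WeightStructure C) (X : C) : Prop := w.ge X ∧ w.le X

/-- A weight structure is bounded if every object lies in some `𝒞^{w≥n}` and some
`𝒞^{w≤m}`. -/
def WeightStructure.Bounded (w : WeightStructure C) : Prop :=
  ∀ X : C, ∃ n m : ℤ, w.geN n X ∧ w.leN m X


section Aux

variable {E : Type*} [Category E] [HasZeroObject E] [HasShift E ℤ]
  [Preadditive E] [∀ n : ℤ, (CategoryTheory.shiftFunctor E n).Additive]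
  [Pretriangulated E] [HasBinaryBiproducts E]

namespace WeightStructure

variable (w : WeightStructure E)

lemma le_shift_iff {X : E} {a b c : ℤ} (h : a + b = c) : w.le (X⟦a⟧⟦b⟧) ↔ w.le (X⟦c⟧) :=
  ⟨w.le_of_iso ((shiftFunctorAdd' E a b c h).symm.app X),
    w.le_of_iso ((shiftFunctorAdd' E a b c h).app X)⟩

lemma ge_shift_iff {X : E} {a b c : ℤ} (h : a + b = c) : w.ge (X⟦a⟧⟦b⟧) ↔ w.ge (X⟦c⟧) :=
  ⟨w.ge_of_iso ((shiftFunctorAdd' E a b c h).symm.app X),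
    w.ge_of_iso ((shiftFunctorAdd' E a b c h).app X)⟩

lemma le_zero_iff {X : E} : w.le (X⟦(0:ℤ)⟧) ↔ w.le X :=
  ⟨w.le_of_iso ((shiftFunctorZero E ℤ).app X), w.le_of_iso ((shiftFunctorZero E ℤ).symm.app X)⟩

lemma ge_zero_iff {X : E} : w.ge (X⟦(0:ℤ)⟧) ↔ w.ge X :=
  ⟨w.ge_of_iso ((shiftFunctorZero E ℤ).app X), w.ge_of_iso ((shiftFunctorZero E ℤ).symm.app X)⟩

lemma le_mono {X : E} {a b : ℤ} (hab : a ≤ b) (h : w.le (X⟦a⟧)) : w.le (X⟦b⟧) := by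
  obtain ⟨d, rfl⟩ : ∃ d : ℕ, b = a + d := ⟨(b - a).toNat, by omega⟩
  induction d with
  | zero => simpa using h
  | succ d ih =>
      have := w.le_shift _ (ih (by omega))
      exact (w.le_shift_iff (by push_cast; ring)).1 this

lemma ge_mono {X : E} {a b : ℤ} (hab : a ≤ b) (h : w.ge (X⟦b⟧)) : w.ge (X⟦a⟧) := by
  obtain ⟨d, rfl⟩ : ∃ d : ℕ, a = b - d := ⟨(b - a).toNat, by omega⟩
  induction d with
  | zero => simpa using h
  | succ d ih =>
      have := w.ge_shift _ (ih (by omega))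
      exact (w.ge_shift_iff (by push_cast; ring)).1 this

lemma hom_zero {B X : E} (hB : w.ge (B⟦(1:ℤ)⟧)) (hX : w.le X) (f : B ⟶ X) : f = 0 := by
  have h := w.orth hB hX ((shiftFunctor E (1:ℤ)).map f)
  exact (shiftFunctor E (1:ℤ)).map_injective (by rw [h, Functor.map_zero])

/-- `le` is closed under extensions. -/
lemma le_ext₂ {T : Triangle E} (hT : T ∈ distTriang E)
    (h1 : w.le T.obj₁) (h3 : w.le T.obj₃) : w.le T.obj₂ := by
  obtain ⟨A, B, f, g, h, hge, hle, hd⟩ := w.decomp T.obj₂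
  have hf2 : f ≫ T.mor₂ = 0 := w.hom_zero hge h3 _
  obtain ⟨u, hu⟩ := Triangle.coyoneda_exact₂ T hT f hf2
  have hf : f = 0 := by rw [hu, w.hom_zero hge h1 u, zero_comp]
  obtain ⟨r, hr⟩ := Triangle.yoneda_exact₂ _ hd (𝟙 T.obj₂)
    (show f ≫ 𝟙 T.obj₂ = 0 by rw [hf, zero_comp])
  exact w.le_retract T.obj₂ A g r hr.symm hle

/-- `ge` is closed under extensions (shifted form). -/
lemma ge_ext₂' {T : Triangle E} (hT : T ∈ distTriang E)
    (h1 : w.ge (T.obj₁⟦(1:ℤ)⟧)) (h3 : w.ge (T.obj₃⟦(1:ℤ)⟧)) : w.ge (T.obj₂⟦(1:ℤ)⟧) := by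
  obtain ⟨A, B, f, g, h, hge, hle, hd⟩ := w.decomp T.obj₂
  have h1g : T.mor₁ ≫ g = 0 := w.hom_zero h1 hle _
  obtain ⟨u, hu⟩ := Triangle.yoneda_exact₂ T hT g h1g
  have hg : g = 0 := by rw [hu, w.hom_zero h3 hle u, comp_zero]
  obtain ⟨s, hs⟩ := Triangle.coyoneda_exact₂ _ hd (𝟙 T.obj₂)
    (show 𝟙 T.obj₂ ≫ g = 0 by rw [hg, comp_zero])
  exact w.ge_retract (T.obj₂⟦(1:ℤ)⟧) (B⟦(1:ℤ)⟧) ((shiftFunctor E (1:ℤ)).map s)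
    ((shiftFunctor E (1:ℤ)).map f)
    (by
      have hs' : s ≫ f = 𝟙 T.obj₂ := hs.symm
      exact ((shiftFunctor E (1:ℤ)).map_comp s f).symm.trans ((congrArg (shiftFunctor E (1:ℤ)).map hs').trans ((shiftFunctor E (1:ℤ)).map_id _))) hge

lemma leN_ext (n : ℤ) {T : Triangle E} (hT : T ∈ distTriang E)
    (h1 : w.le (T.obj₁⟦n⟧)) (h3 : w.le (T.obj₃⟦n⟧)) : w.le (T.obj₂⟦n⟧) :=
  w.le_ext₂ (Triangle.shift_distinguished T hT n) h1 h3

lemma geN_ext (n : ℤ) {T : Triangle E} (hT : T ∈ distTriang E)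
    (h1 : w.ge (T.obj₁⟦n⟧)) (h3 : w.ge (T.obj₃⟦n⟧)) : w.ge (T.obj₂⟦n⟧) := by
  have := w.ge_ext₂' (Triangle.shift_distinguished T hT (n - 1))
    (show w.ge (T.obj₁⟦n-1⟧⟦(1:ℤ)⟧) from (w.ge_shift_iff (by ring)).2 h1)
    (show w.ge (T.obj₃⟦n-1⟧⟦(1:ℤ)⟧) from (w.ge_shift_iff (by ring)).2 h3)
  exact (w.ge_shift_iff (by ring)).1 this

lemma ge_ext₂ {T : Triangle E} (hT : T ∈ distTriang E)
    (h1 : w.ge T.obj₁) (h3 : w.ge T.obj₃) : w.ge T.obj₂ :=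
  w.ge_zero_iff.1 (w.geN_ext 0 hT (w.ge_zero_iff.2 h1) (w.ge_zero_iff.2 h3))

/-- Shifted weight decompositions. -/
lemma decompN (n b : ℤ) (hnb : n + 1 = b) (X : E) :
    ∃ (A B : E) (f : B ⟶ X) (g : X ⟶ A) (h : A ⟶ B⟦(1:ℤ)⟧),
      w.ge (B⟦b⟧) ∧ w.le (A⟦n⟧) ∧ Triangle.mk f g h ∈ distTriang E := by
  obtain ⟨A₀, B₀, f₀, g₀, h₀, hge₀, hle₀, hd₀⟩ := w.decomp (X⟦n⟧)
  have hd₁ := Triangle.shift_distinguished _ hd₀ (-n)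
  set T₁ := (shiftFunctor (Triangle E) (-n)).obj (Triangle.mk f₀ g₀ h₀) with hT₁
  have e : (X⟦n⟧)⟦(-n:ℤ)⟧ ≅ X := (shiftFunctorCompIsoId E n (-n) (by ring)).app X
  refine ⟨A₀⟦(-n:ℤ)⟧, B₀⟦(-n:ℤ)⟧, T₁.mor₁ ≫ e.hom, e.inv ≫ T₁.mor₂, T₁.mor₃, ?_, ?_, ?_⟩
  · exact (w.ge_shift_iff (show (-n:ℤ) + b = 1 by omega)).2 hge₀
  · exact (w.le_shift_iff (show (-n:ℤ) + n = 0 by ring)).2 (w.le_zero_iff.2 hle₀)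
  · exact isomorphic_distinguished _ hd₁ _
      (Triangle.isoMk _ _ (Iso.refl _) e.symm (Iso.refl _) (by exact (Category.assoc _ _ _).trans ((congrArg (T₁.mor₁ ≫ ·) e.hom_inv_id).trans ((comp_id _).trans (id_comp _).symm))) (by exact comp_id _) (by exact ((congrArg (T₁.mor₃ ≫ ·) ((shiftFunctor E (1:ℤ)).map_id _)).trans (comp_id _)).trans (id_comp _).symm))

end WeightStructure

end Aux

/-- A triangulated functor between categories with bounded weight structures is w-exact
iff it maps the heart into the heart. -/
theorem stmt_6 {D : Type*} [Category D] [HasZeroObject D] [HasShift D ℤ]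
    [Preadditive D] [∀ n : ℤ, (CategoryTheory.shiftFunctor D n).Additive]
    [Pretriangulated D] [HasBinaryBiproducts D]
    (wC : WeightStructure C) (wD : WeightStructure D) (hb : wC.Bounded)
    (F : C ⥤ D) [F.CommShift ℤ] [F.IsTriangulated] :
    ((∀ X : C, wC.le X → wD.le (F.obj X)) ∧ (∀ X : C, wC.ge X → wD.ge (F.obj X))) ↔
      (∀ X : C, wC.heart X → wD.heart (F.obj X)) := by
  constructor
  · rintro ⟨hle, hge⟩ X ⟨hgX, hlX⟩
    exact ⟨hge X hgX, hle X hlX⟩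
  · intro hH
    -- Key induction for the `le` part
    have keyA : ∀ k : ℕ, ∀ X : C, wC.le X → wC.ge (X⟦(-(k:ℤ))⟧) → wD.le (F.obj X) := by
      intro k
      induction k with
      | zero =>
          intro X hl hg
          simp only [Nat.cast_zero, neg_zero] at hg
          exact (hH X ⟨wC.ge_zero_iff.1 hg, hl⟩).2
      | succ k ih =>
          intro X hl hg
          obtain ⟨A, B, f, g, h, hgeB, hleA, hd⟩ := wC.decompN (-1) 0 (by ring) X
          have hgeB' : wC.ge B := wC.ge_zero_iff.1 hgeB
          -- `B` is in the heart
          have hleB : wC.le B :=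
            wC.le_ext₂ (inv_rot_of_distTriang _ hd) hleA hl
          have hFB : wD.heart (F.obj B) := hH B ⟨hgeB', hleB⟩
          -- `A⟦-1⟧` has shorter weight range
          have hgeA : wC.ge (A⟦(-(k + 1 : ℕ) : ℤ)⟧) := by
            refine wC.geN_ext _ (rot_of_distTriang _ hd) hg ?_
            exact (wC.ge_shift_iff rfl).2
              (wC.ge_mono (by push_cast; omega) (wC.ge_zero_iff.2 hgeB'))
          have hgeA' : wC.ge ((A⟦(-1:ℤ)⟧)⟦(-(k:ℤ))⟧) :=
            (wC.ge_shift_iff (show (-1:ℤ) + -(k:ℤ) = -((k:ℕ)+1:ℕ) by push_cast; ring)).2 hgeA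
          have hFA : wD.le (F.obj (A⟦(-1:ℤ)⟧)) := ih (A⟦(-1:ℤ)⟧) hleA hgeA'
          have hFA' : wD.le (F.obj A) := by
            have h1 : wD.le ((F.obj A)⟦(-1:ℤ)⟧) :=
              wD.le_of_iso ((F.commShiftIso (-1:ℤ)).app A) hFA
            exact wD.le_zero_iff.1 (wD.le_mono (by omega) h1)
          exact wD.le_ext₂ (F.map_distinguished _ hd) hFB.2 hFA'
    -- Key induction for the `ge` part
    have keyB : ∀ m : ℕ, ∀ X : C, wC.ge X → wC.le (X⟦(m:ℤ)⟧) → wD.ge (F.obj X) := by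
      intro m
      induction m with
      | zero =>
          intro X hg hl
          simp only [Nat.cast_zero] at hl
          exact (hH X ⟨hg, wC.le_zero_iff.1 hl⟩).1
      | succ m ih =>
          intro X hg hl
          obtain ⟨A, B, f, g, h, hgeB, hleA, hd⟩ := wC.decompN 0 1 (by ring) X
          have hleA' : wC.le A := wC.le_zero_iff.1 hleA
          -- `A` is in the heart
          have hgeA : wC.ge A :=
            wC.ge_ext₂ (rot_of_distTriang _ hd) hg hgeB
          have hFA : wD.heart (F.obj A) := hH A ⟨hgeA, hleA'⟩
          -- `B⟦1⟧` has shorter weight range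
          have hleB : wC.le (B⟦((m + 1 : ℕ) : ℤ)⟧) := by
            refine wC.leN_ext _ (inv_rot_of_distTriang _ hd) ?_ hl
            exact (wC.le_shift_iff (show (-1:ℤ) + ((m+1:ℕ):ℤ) = (m:ℤ) by push_cast; ring)).2
              (wC.le_mono (by omega) (wC.le_zero_iff.2 hleA'))
          have hleB' : wC.le ((B⟦(1:ℤ)⟧)⟦(m:ℤ)⟧) :=
            (wC.le_shift_iff (show (1:ℤ) + (m:ℤ) = ((m+1:ℕ):ℤ) by push_cast; ring)).2 hleB
          have hFB : wD.ge (F.obj (B⟦(1:ℤ)⟧)) := ih (B⟦(1:ℤ)⟧) hgeB hleB'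
          have hFB' : wD.ge (F.obj B) := by
            have h1 : wD.ge ((F.obj B)⟦(1:ℤ)⟧) :=
              wD.ge_of_iso ((F.commShiftIso (1:ℤ)).app B) hFB
            exact wD.ge_zero_iff.1 (wD.ge_mono (by omega) h1)
          exact wD.ge_ext₂ (F.map_distinguished _ hd) hFB' hFA.1
    refine ⟨fun X hlX => ?_, fun X hgX => ?_⟩
    · obtain ⟨n, m, hgn, _⟩ := hb X
      exact keyA (-n).toNat X hlX (wC.ge_mono (by omega) hgn)
    · obtain ⟨n, m, _, hlm⟩ := hb X
      exact keyB m.toNat X hgX (wC.le_mono (by omega) hlm)
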